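/- Let A₀ be the symmetric matrix A₀ = [[6,1,2],[1,5,3],[2,3,4]] ∈ ℝ^{3×3}. Then: (i) A₀ is asymmetric, i.e., Aut(A₀) = {I₃}; (ii) A₀·1 = 9·1, where 1 is the all-ones vector; (iii) the matrix J/3 with all entries equal to 1/3 satisfies J/3 ∈ Aut_conv(A₀). Consequently Aut_conv(A₀) ≠ conv(Aut(A₀)), so DS(A₀) is not exact (and not weakly exact). -/

import Mathlib

open Matrix MeasureTheory Finset

noncomputable section

def pm (n : ℕ) (σ : Equiv.Perm (Fin n)) : Matrix (Fin n) (Fin n) ℝ :=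
  Matrix.of fun i j => if σ j = i then (1 : ℝ) else 0

def IsPermMatrix {n : ℕ} (P : Matrix (Fin n) (Fin n) ℝ) : Prop :=
  ∃ σ : Equiv.Perm (Fin n), P = pm n σ

def DS (n : ℕ) : Set (Matrix (Fin n) (Fin n) ℝ) :=
  {S | (∀ i j, 0 ≤ S i j) ∧ (∀ i, ∑ j, S i j = 1) ∧ (∀ j, ∑ i, S i j = 1)}

def Aut {n : ℕ} (A : Matrix (Fin n) (Fin n) ℝ) : Set (Matrix (Fin n) (Fin n) ℝ) :=
  {P | IsPermMatrix P ∧ A * P = P * A}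

def AutConv {n : ℕ} (A : Matrix (Fin n) (Fin n) ℝ) : Set (Matrix (Fin n) (Fin n) ℝ) :=
  {S | S ∈ DS n ∧ A * S = S * A}

def ConvexExact {n : ℕ} (A : Matrix (Fin n) (Fin n) ℝ) : Prop :=
  AutConv A = convexHull ℝ (Aut A)

/-- The counterexample matrix `A₀`. -/
def A0 : Matrix (Fin 3) (Fin 3) ℝ := !![6, 1, 2; 1, 5, 3; 2, 3, 4]

lemma mul_pm (σ : Equiv.Perm (Fin 3)) (i j : Fin 3) :
    (A0 * pm 3 σ) i j = A0 i (σ j) := by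
  simp [Matrix.mul_apply, pm]

lemma pm_mul (σ : Equiv.Perm (Fin 3)) (i j : Fin 3) :
    (pm 3 σ * A0) i j = A0 (σ.symm i) j := by
  simp [Matrix.mul_apply, pm]
  rw [Finset.sum_eq_single (σ.symm i)] <;> simp +contextual [Equiv.eq_symm_apply]

lemma sigma_eq_one (σ : Equiv.Perm (Fin 3)) (h : A0 * pm 3 σ = pm 3 σ * A0) : σ = 1 := by
  have hd : ∀ i, A0 (σ i) (σ i) = A0 i i := by
    intro i
    have := congrFun (congrFun h (σ i)) i
    rw [mul_pm, pm_mul, Equiv.symm_apply_apply] at this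
    exact this
  have h3 : ∀ x : Fin 3, x = 0 ∨ x = 1 ∨ x = 2 := by decide
  have hfix : ∀ i, σ i = i := by
    intro i
    have := hd i
    rcases h3 (σ i) with hx | hx | hx <;> rcases h3 i with hi | hi | hi <;>
      rw [hx, hi] at this ⊢ <;> first | rfl | (norm_num [A0, Matrix.cons_val_two, Matrix.tail_cons, Matrix.head_cons] at this)
  exact Equiv.ext hfix

lemma pm_one : pm 3 (1 : Equiv.Perm (Fin 3)) = 1 := by
  ext i j
  simp [pm, Matrix.one_apply, eq_comm]

lemma aut_eq : Aut A0 = {(1 : Matrix (Fin 3) (Fin 3) ℝ)} := by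
  ext P
  constructor
  · rintro ⟨⟨σ, rfl⟩, hcomm⟩
    have := sigma_eq_one σ hcomm
    subst this
    simpa using pm_one
  · rintro rfl
    exact ⟨⟨1, pm_one.symm⟩, by simp⟩

lemma J_mem : (Matrix.of fun _ _ => (1 / 3 : ℝ)) ∈ AutConv A0 := by
  refine ⟨⟨fun i j => by norm_num, fun i => by norm_num [Fin.sum_univ_three],
    fun j => by norm_num [Fin.sum_univ_three]⟩, ?_⟩
  ext i j
  fin_cases i <;> fin_cases j <;>
    simp [Matrix.mul_apply, Fin.sum_univ_three, A0] <;> norm_num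

/-- `A₀` is asymmetric (its only automorphism is the identity), the
all-ones vector is an eigenvector with eigenvalue 9, and the constant matrix `J/3` is a
convex automorphism; hence `DS(A₀)` is neither exact nor weakly exact. -/
theorem stmt18 :
    Aut A0 = {(1 : Matrix (Fin 3) (Fin 3) ℝ)} ∧
    A0 *ᵥ (1 : Fin 3 → ℝ) = (9 : ℝ) • (1 : Fin 3 → ℝ) ∧
    (Matrix.of fun _ _ => (1 / 3 : ℝ)) ∈ AutConv A0 ∧
    ¬ ConvexExact A0 ∧
    ¬ (∀ S ∈ AutConv A0, ∀ i j, (∀ P ∈ Aut A0, P i j = 0) → S i j = 0) := by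
  have hJne : (Matrix.of fun _ _ => (1 / 3 : ℝ)) ≠ (1 : Matrix (Fin 3) (Fin 3) ℝ) := by
    intro h
    have := congrFun (congrFun h 0) 0
    simp [Matrix.one_apply] at this
  refine ⟨aut_eq, ?_, J_mem, ?_, ?_⟩
  · funext i
    fin_cases i <;> norm_num [Matrix.mulVec, dotProduct, Fin.sum_univ_three, A0, Matrix.cons_val_two, Matrix.tail_cons, Matrix.head_cons]
  · intro h
    rw [ConvexExact, aut_eq, convexHull_singleton] at h
    have := J_mem
    rw [h] at this
    exact hJne this
  · intro h
    have := h _ J_mem 0 1 (by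
      intro P hP
      rw [aut_eq] at hP
      rw [Set.mem_singleton_iff] at hP
      subst hP
      simp [Matrix.one_apply])
    norm_num at this
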